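/- Let n ≥ 1, α > 1 with (α−1)n ≥ 4, a ≤ 0, k ≥ 0, B ≥ 0, and μ, s ≥ 0. Then (s²μ((α−1)|a| + 2k) + sB + 1) / ((1 + (α−1)μs)·((1 + (α−1)μs) − 4sμ/n)) ≤ sB + 1 + s((α−1)|a| + 2k)/(α−1). -/

import Mathlib

/-- Inequality (33.13). -/
theorem stmt3 (n α a k B μ s : ℝ) (hn : 1 ≤ n) (hα : 1 < α) (h : 4 ≤ (α - 1) * n)
    (ha : a ≤ 0) (hk : 0 ≤ k) (hB : 0 ≤ B) (hμ : 0 ≤ μ) (hs : 0 ≤ s) :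
    (s ^ 2 * μ * ((α - 1) * |a| + 2 * k) + s * B + 1) /
        ((1 + (α - 1) * μ * s) * ((1 + (α - 1) * μ * s) - 4 * s * μ / n))
      ≤ s * B + 1 + s * ((α - 1) * |a| + 2 * k) / (α - 1) := by
  have hn0 : (0:ℝ) < n := lt_of_lt_of_le one_pos hn
  have hα1 : (0:ℝ) < α - 1 := by linarith
  have hC : 0 ≤ (α - 1) * |a| + 2 * k := by positivity
  have hP : (1:ℝ) ≤ 1 + (α - 1) * μ * s := by nlinarith [mul_nonneg hμ hs]
  -- 4/n ≤ α - 1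
  have h4 : 4 * s * μ / n ≤ (α - 1) * μ * s := by
    rw [div_le_iff₀ hn0]
    nlinarith [mul_nonneg hμ hs]
  have hQ : (1:ℝ) ≤ (1 + (α - 1) * μ * s) - 4 * s * μ / n := by linarith
  have hD : (1:ℝ) ≤ (1 + (α - 1) * μ * s) * ((1 + (α - 1) * μ * s) - 4 * s * μ / n) := by
    nlinarith [mul_le_mul hP hQ zero_le_one (le_trans zero_le_one hP)]
  have hD0 : 0 < (1 + (α - 1) * μ * s) * ((1 + (α - 1) * μ * s) - 4 * s * μ / n) := by linarith
  rw [div_le_iff₀ hD0]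
  have hRHS : 0 ≤ s * B + 1 + s * ((α - 1) * |a| + 2 * k) / (α - 1) := by positivity
  have key : s ^ 2 * μ * ((α - 1) * |a| + 2 * k) + s * B + 1
      ≤ (s * B + 1 + s * ((α - 1) * |a| + 2 * k) / (α - 1)) * (1 + (α - 1) * μ * s) := by
    have : s * ((α - 1) * |a| + 2 * k) / (α - 1) * ((α - 1) * μ * s)
        = s ^ 2 * μ * ((α - 1) * |a| + 2 * k) := by
      field_simp
    have expand : (s * B + 1 + s * ((α - 1) * |a| + 2 * k) / (α - 1)) * (1 + (α - 1) * μ * s)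
        = (s * B + 1) + (s * B + 1) * ((α - 1) * μ * s)
          + s * ((α - 1) * |a| + 2 * k) / (α - 1)
          + s * ((α - 1) * |a| + 2 * k) / (α - 1) * ((α - 1) * μ * s) := by ring
    rw [expand, this]
    have h1 : 0 ≤ (s * B + 1) * ((α - 1) * μ * s) := by positivity
    have h2 : 0 ≤ s * ((α - 1) * |a| + 2 * k) / (α - 1) := by positivity
    linarith
  calc s ^ 2 * μ * ((α - 1) * |a| + 2 * k) + s * B + 1
      ≤ (s * B + 1 + s * ((α - 1) * |a| + 2 * k) / (α - 1)) * (1 + (α - 1) * μ * s) := key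
    _ ≤ _ := by
        apply mul_le_mul_of_nonneg_left _ hRHS
        nlinarith [mul_nonneg hμ hs]
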